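/- Let p be a positive integer, and define the polynomials G_n(p) ∈ ℝ[t] by G_0(p) = 1 and G_n(p) = (p/n) Σ_{k=1}^{n} (−1)^{k+1} B_k · G_{n−k}(p) for n ≥ 1, where B_k ∈ ℝ[t] is the k-th Bernoulli polynomial. Then for every n with 0 ≤ n ≤ p, the polynomial G_n(p) has degree exactly n in t. -/

import Mathlib

open Finset Polynomial

/-- The `k`-th Bernoulli polynomial as a real polynomial
(generating function `u e^{tu}/(e^u - 1)`, so `bernR 1 = X - 1/2`). -/
noncomputable def bernR (k : ℕ) : Polynomial ℝ :=
  (Polynomial.bernoulli k).map (algebraMap ℚ ℝ)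

theorem bernoulli_natDegree_le (n : ℕ) : (Polynomial.bernoulli n).natDegree ≤ n := by
  apply (Polynomial.natDegree_sum_le _ _).trans
  rw [Finset.fold_max_le]
  refine ⟨Nat.zero_le _, fun i hi => ?_⟩
  exact (Polynomial.natDegree_monomial_le _).trans (Nat.sub_le _ _)

theorem bernoulli_coeff_self (n : ℕ) : (Polynomial.bernoulli n).coeff n = 1 := by
  rw [Polynomial.bernoulli, Polynomial.finset_sum_coeff]
  rw [Finset.sum_eq_single 0]
  · simp
  · intro i hi h0
    rw [Finset.mem_range] at hi
    rw [Polynomial.coeff_monomial, if_neg (by omega)]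
  · simp

theorem bernR_coeff_self (n : ℕ) : (bernR n).coeff n = 1 := by
  rw [bernR, Polynomial.coeff_map, bernoulli_coeff_self, map_one]

theorem bernR_natDegree (n : ℕ) : (bernR n).natDegree = n := by
  refine le_antisymm (Polynomial.natDegree_map_le.trans (bernoulli_natDegree_le n)) ?_
  apply Polynomial.le_natDegree_of_ne_zero
  rw [bernR_coeff_self]; norm_num

theorem altsum (q m : ℕ) :
    ∑ j ∈ Finset.range (m + 1), (-1 : ℝ) ^ j * ((q + 1).choose j : ℝ)
      = (-1) ^ m * (q.choose m : ℝ) := by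
  induction m with
  | zero => simp
  | succ m ih =>
    rw [Finset.sum_range_succ, ih, Nat.choose_succ_succ q m]
    push_cast
    ring

theorem negpow (m i : ℕ) (h : i ≤ m) : (-1 : ℝ) ^ (m - i) = (-1) ^ m * (-1) ^ i := by
  have h2 : (-1 : ℝ) ^ (m - i) * (-1) ^ i = (-1) ^ m := by
    rw [← pow_add, Nat.sub_add_cancel h]
  rw [← h2, mul_assoc, ← mul_pow]
  norm_num

theorem keysum (p n : ℕ) (hp : 1 ≤ p) (hn : 1 ≤ n) :
    ∑ k ∈ Finset.Icc 1 n, (-1 : ℝ) ^ (k + 1) * (p.choose (n - k) : ℝ)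
      = ((p - 1).choose (n - 1) : ℝ) := by
  obtain ⟨q, rfl⟩ : ∃ q, p = q + 1 := ⟨p - 1, by omega⟩
  obtain ⟨m, rfl⟩ : ∃ m, n = m + 1 := ⟨n - 1, by omega⟩
  simp only [Nat.add_sub_cancel]
  rw [← Finset.Ico_add_one_right_eq_Icc, Finset.sum_Ico_eq_sum_range]
  simp only [show m + 1 + 1 - 1 = m + 1 from rfl]
  have h1 : ∀ i ∈ Finset.range (m + 1),
      (-1 : ℝ) ^ (1 + i + 1) * ((q+1).choose (m + 1 - (1 + i)) : ℝ)
      = (-1 : ℝ) ^ i * ((q+1).choose (m - i) : ℝ) := by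
    intro i hi
    rw [Finset.mem_range] at hi
    rw [show m + 1 - (1 + i) = m - i by omega, show 1 + i + 1 = i + 2 by ring, pow_add]
    ring
  rw [Finset.sum_congr rfl h1, ← Finset.sum_range_reflect]
  simp only [Nat.add_sub_cancel]
  have h2 : ∀ i ∈ Finset.range (m + 1),
      (-1 : ℝ) ^ (m - i) * ((q+1).choose (m - (m - i)) : ℝ)
      = (-1 : ℝ) ^ m * ((-1 : ℝ) ^ i * ((q+1).choose i : ℝ)) := by
    intro i hi
    rw [Finset.mem_range] at hi
    rw [show m - (m - i) = i by omega, negpow m i (by omega)]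
    ring
  rw [Finset.sum_congr rfl h2, ← Finset.mul_sum, altsum, ← mul_assoc, ← pow_add]
  rw [show m + m = 2 * m by ring, pow_mul]
  norm_num

/-- if `p` is a positive integer, then for `0 ≤ n ≤ p`
the polynomial `Gₙ(p) ∈ ℝ[t]` has degree exactly `n`. -/
theorem G_degree_of_pos_int_le
    (p : ℕ) (hp : 0 < p)
    (G : ℕ → Polynomial ℝ) (hG0 : G 0 = 1)
    (hG : ∀ n : ℕ, 1 ≤ n →
      G n = Polynomial.C ((p : ℝ) / (n : ℝ)) *
        ∑ k ∈ Finset.Icc 1 n, (-1 : Polynomial ℝ) ^ (k + 1) * bernR k * G (n - k)) :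
    ∀ n : ℕ, n ≤ p → (G n).degree = n := by
  have key : ∀ n : ℕ, n ≤ p → (G n).natDegree = n ∧ (G n).coeff n = (p.choose n : ℝ) := by
    intro n
    induction n using Nat.strong_induction_on with
    | _ n ih =>
      intro hnp
      rcases Nat.eq_zero_or_pos n with rfl | hn
      · simp [hG0]
      -- rewrite terms of the sum
      have hterm : ∀ k ∈ Finset.Icc 1 n,
          (-1 : Polynomial ℝ) ^ (k + 1) * bernR k * G (n - k)
          = Polynomial.C ((-1 : ℝ) ^ (k + 1)) * (bernR k * G (n - k)) := by
        intro k hk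
        rw [← mul_assoc]
        congr 1
        rw [map_pow, map_neg, map_one]
      have hGn : G n = Polynomial.C ((p : ℝ) / (n : ℝ)) *
          ∑ k ∈ Finset.Icc 1 n,
            Polynomial.C ((-1 : ℝ) ^ (k + 1)) * (bernR k * G (n - k)) := by
        rw [hG n hn, Finset.sum_congr rfl hterm]
      have hIH : ∀ k ∈ Finset.Icc 1 n,
          (G (n - k)).natDegree = n - k ∧ (G (n - k)).coeff (n - k) = (p.choose (n - k) : ℝ) := by
        intro k hk
        rw [Finset.mem_Icc] at hk
        exact ih (n - k) (by omega) (by omega)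
      -- natDegree bound
      have hdegS : ∀ k ∈ Finset.Icc 1 n,
          (Polynomial.C ((-1 : ℝ) ^ (k + 1)) * (bernR k * G (n - k))).natDegree ≤ n := by
        intro k hk
        have hk' := Finset.mem_Icc.mp hk
        apply (Polynomial.natDegree_C_mul_le _ _).trans
        apply (Polynomial.natDegree_mul_le).trans
        rw [bernR_natDegree, (hIH k hk).1]
        omega
      have hdle : (G n).natDegree ≤ n := by
        rw [hGn]
        exact (Polynomial.natDegree_C_mul_le _ _).trans
          (Polynomial.natDegree_sum_le_of_forall_le _ _ hdegS)
      have hcoeff : (G n).coeff n = (p.choose n : ℝ) := by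
        have hterm2 : ∀ k ∈ Finset.Icc 1 n,
            (Polynomial.C ((-1 : ℝ) ^ (k + 1)) * (bernR k * G (n - k))).coeff n
            = (-1 : ℝ) ^ (k + 1) * (p.choose (n - k) : ℝ) := by
          intro k hk
          have hk' := Finset.mem_Icc.mp hk
          have hsplit : n = (bernR k).natDegree + (G (n - k)).natDegree := by
            rw [bernR_natDegree, (hIH k hk).1]; omega
          have hmul := Polynomial.coeff_mul_degree_add_degree (bernR k) (G (n - k))
          rw [← hsplit] at hmul
          rw [Polynomial.coeff_C_mul, hmul]
          rw [Polynomial.leadingCoeff, Polynomial.leadingCoeff, bernR_natDegree,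
            bernR_coeff_self, (hIH k hk).1, (hIH k hk).2, one_mul]
        rw [hGn, Polynomial.coeff_C_mul, Polynomial.finset_sum_coeff,
          Finset.sum_congr rfl hterm2, keysum p n hp hn]
        have hid : (p : ℝ) * ((p - 1).choose (n - 1) : ℝ) = (n : ℝ) * (p.choose n : ℝ) := by
          have := Nat.add_one_mul_choose_eq (p - 1) (n - 1)
          rw [show p - 1 + 1 = p by omega, show n - 1 + 1 = n by omega] at this
          exact_mod_cast this.trans (mul_comm _ _)
        have hn0 : (n : ℝ) ≠ 0 := by positivity
        field_simp
        linarith [hid]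
      refine ⟨le_antisymm hdle ?_, hcoeff⟩
      apply Polynomial.le_natDegree_of_ne_zero
      rw [hcoeff]
      have hc : (0 : ℝ) < p.choose n := by exact_mod_cast Nat.choose_pos hnp
      exact ne_of_gt hc
  intro n hnp
  obtain ⟨h1, h2⟩ := key n hnp
  have hne : G n ≠ 0 := by
    intro h
    rw [h, Polynomial.coeff_zero] at h2
    have hc : (0 : ℝ) < p.choose n := by exact_mod_cast Nat.choose_pos hnp
    linarith [h2.symm]
  rw [Polynomial.degree_eq_natDegree hne, h1]
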